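/- Let f(T) = F̄ e^Z where Z is a random variable with finite E[e^{Z/2}] and E[e^{−Z/2}], and F̄ = F · E[e^{−Z/2}]/E[e^{Z/2}]. Then this choice of F̄ is the unique positive constant for which the no-arbitrage condition E[√f(T)]/E[1/√f(T)] = F holds, and the resulting call price (e^{−r_$ T}/E[1/√f(T)]) E[(√f(T) − K/√f(T))_+] equals e^{−r_$ T}(F·M(1/2,z₀)/M(1/2) − K·M(−1/2,z₀)/M(−1/2)), where z₀ = log(K/F̄), M(t) = E[e^{tZ}], and M(t,z₀) = E[e^{tZ} 1_{Z > z₀}]. -/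

import Mathlib

open MeasureTheory

private lemma sqrt_mul_exp (c x : ℝ) (hc : 0 ≤ c) :
    Real.sqrt (c * Real.exp x) = Real.sqrt c * Real.exp (x / 2) := by
  rw [Real.sqrt_mul hc, Real.exp_half]

/-- Extended skew normal pricing. Let `f(T) = F̄ e^Z` with `E[e^{±Z/2}] < ∞` and
`F̄ = F·E[e^{−Z/2}]/E[e^{Z/2}]`. Then `F̄` is the unique positive constant for which the
no-arbitrage condition `E[√f(T)]/E[1/√f(T)] = F` holds, and the call price
`(e^{−r_$ T}/E[1/√f(T)]) E[(√f(T) − K/√f(T))₊]` equals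
`e^{−r_$ T}(F·M(1/2,z₀)/M(1/2) − K·M(−1/2,z₀)/M(−1/2))`, where `z₀ = log(K/F̄)`,
`M(t) = E[e^{tZ}]` and `M(t,z₀) = E[e^{tZ} 1_{Z>z₀}]`. -/
theorem stmt_15 {Ω : Type*} [MeasurableSpace Ω] (P : Measure Ω) [IsProbabilityMeasure P]
    (Z : Ω → ℝ) (hZ : Measurable Z)
    (h1 : Integrable (fun ω => Real.exp (Z ω / 2)) P)
    (h2 : Integrable (fun ω => Real.exp (-(Z ω) / 2)) P)
    (F K rUSD T : ℝ) (hF : 0 < F) (hK : 0 < K) :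
    let Fbar := F * (∫ ω, Real.exp (-(Z ω) / 2) ∂P) / (∫ ω, Real.exp (Z ω / 2) ∂P)
    let M : ℝ → ℝ := fun t => ∫ ω, Real.exp (t * Z ω) ∂P
    let z₀ := Real.log (K / Fbar)
    let Mres : ℝ → ℝ := fun t => ∫ ω, (if z₀ < Z ω then Real.exp (t * Z ω) else 0) ∂P
    (∀ c : ℝ, 0 < c →
      ((∫ ω, Real.sqrt (c * Real.exp (Z ω)) ∂P) /
          (∫ ω, (Real.sqrt (c * Real.exp (Z ω)))⁻¹ ∂P) = F
        ↔ c = Fbar))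
    ∧ (Real.exp (-(rUSD * T)) / (∫ ω, (Real.sqrt (Fbar * Real.exp (Z ω)))⁻¹ ∂P)) *
        (∫ ω, max (Real.sqrt (Fbar * Real.exp (Z ω))
            - K / Real.sqrt (Fbar * Real.exp (Z ω))) 0 ∂P)
      = Real.exp (-(rUSD * T)) *
          (F * Mres (1 / 2) / M (1 / 2) - K * Mres (-(1 / 2)) / M (-(1 / 2))) := by
  intro Fbar M z₀ Mres
  set A := ∫ ω, Real.exp (Z ω / 2) ∂P with hA_def
  set B := ∫ ω, Real.exp (-(Z ω) / 2) ∂P with hB_def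
  have hApos : 0 < A := integral_exp_pos h1
  have hBpos : 0 < B := integral_exp_pos h2
  have hFbar_def : Fbar = F * B / A := rfl
  have hFbarpos : 0 < Fbar := by
    rw [hFbar_def]; exact div_pos (mul_pos hF hBpos) hApos
  -- integral computations
  have int1 : ∀ c : ℝ, 0 < c →
      (∫ ω, Real.sqrt (c * Real.exp (Z ω)) ∂P) = Real.sqrt c * A := by
    intro c hc
    simp_rw [sqrt_mul_exp _ _ hc.le]
    rw [integral_const_mul]
  have int2 : ∀ c : ℝ, 0 < c →
      (∫ ω, (Real.sqrt (c * Real.exp (Z ω)))⁻¹ ∂P) = (Real.sqrt c)⁻¹ * B := by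
    intro c hc
    have : ∀ ω, (Real.sqrt (c * Real.exp (Z ω)))⁻¹
        = (Real.sqrt c)⁻¹ * Real.exp (-(Z ω) / 2) := by
      intro ω
      rw [sqrt_mul_exp _ _ hc.le, mul_inv, ← Real.exp_neg, neg_div]
    simp_rw [this]
    rw [integral_const_mul]
  constructor
  · intro c hc
    have hsc : 0 < Real.sqrt c := Real.sqrt_pos.2 hc
    rw [int1 c hc, int2 c hc]
    have key : Real.sqrt c * A / ((Real.sqrt c)⁻¹ * B) = c * A / B := by
      rw [show (Real.sqrt c)⁻¹ * B = B / Real.sqrt c by ring, div_div_eq_mul_div]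
      have h' : Real.sqrt c * A * Real.sqrt c = c * A := by
        have := Real.mul_self_sqrt hc.le
        linear_combination A * this
      rw [h']
    rw [key, hFbar_def]
    rw [div_eq_iff hBpos.ne', eq_div_iff hApos.ne']
  · -- pricing formula
    set s := Real.sqrt Fbar with hs_def
    have hspos : 0 < s := Real.sqrt_pos.2 hFbarpos
    have hs2 : s * s = Fbar := Real.mul_self_sqrt hFbarpos.le
    have hz0 : Real.exp z₀ = K / Fbar := Real.exp_log (by positivity)
    have hmeas : MeasurableSet {ω | z₀ < Z ω} := measurableSet_lt measurable_const hZ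
    -- integrability of truncated integrands
    have hI1 : Integrable (fun ω => if z₀ < Z ω then Real.exp (Z ω / 2) else 0) P := by
      have := h1.indicator hmeas
      refine this.congr (Filter.Eventually.of_forall fun ω => ?_)
      simp [Set.indicator_apply]
    have hI2 : Integrable (fun ω => if z₀ < Z ω then Real.exp (-(Z ω) / 2) else 0) P := by
      have := h2.indicator hmeas
      refine this.congr (Filter.Eventually.of_forall fun ω => ?_)
      simp [Set.indicator_apply]
    have hI1' : Integrable (fun ω => if z₀ < Z ω then s * Real.exp (Z ω / 2) else 0) P := by
      have := hI1.const_mul s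
      simpa [mul_ite] using this
    have hI2' : Integrable (fun ω => if z₀ < Z ω then (K / s) * Real.exp (-(Z ω) / 2) else 0) P := by
      have := hI2.const_mul (K / s)
      simpa [mul_ite] using this
    -- pointwise identity for the payoff
    have hmax : ∀ ω, max (Real.sqrt (Fbar * Real.exp (Z ω))
        - K / Real.sqrt (Fbar * Real.exp (Z ω))) 0
        = (if z₀ < Z ω then s * Real.exp (Z ω / 2) else 0)
          - (if z₀ < Z ω then (K / s) * Real.exp (-(Z ω) / 2) else 0) := by
      intro ω
      have hu : 0 < Real.exp (Z ω / 2) := Real.exp_pos _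
      set u := Real.exp (Z ω / 2) with hu_def
      have huu : u * u = Real.exp (Z ω) := by
        rw [hu_def, ← Real.exp_add]; ring_nf
      have hexpneg : Real.exp (-(Z ω) / 2) = u⁻¹ := by
        rw [hu_def, ← Real.exp_neg, neg_div]
      rw [sqrt_mul_exp _ _ hFbarpos.le, ← hs_def, hexpneg]
      have hKdiv : K / (s * u) = K / s * u⁻¹ := by field_simp
      by_cases h : z₀ < Z ω
      · simp only [if_pos h]
        rw [hKdiv]
        apply max_eq_left
        have hlt : K < Fbar * Real.exp (Z ω) := by
          have := Real.exp_lt_exp.2 h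
          rw [hz0] at this
          calc K = K / Fbar * Fbar := by field_simp
          _ < Real.exp (Z ω) * Fbar := by
              exact mul_lt_mul_of_pos_right this hFbarpos
          _ = Fbar * Real.exp (Z ω) := mul_comm _ _
        have heq : s * u * (s * u) = Fbar * Real.exp (Z ω) := by
          rw [← hs2, ← huu]; ring
        rw [sub_nonneg, ← hKdiv, div_le_iff₀ (by positivity)]
        nlinarith [heq]
      · simp only [if_neg h, sub_self]
        push_neg at h
        have hle : Fbar * Real.exp (Z ω) ≤ K := by
          have := Real.exp_le_exp.2 h
          rw [hz0] at this
          calc Fbar * Real.exp (Z ω) ≤ Fbar * (K / Fbar) :=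
            mul_le_mul_of_nonneg_left this hFbarpos.le
          _ = K := by field_simp
        apply max_eq_right
        have heq : s * u * (s * u) = Fbar * Real.exp (Z ω) := by
          rw [← hs2, ← huu]; ring
        rw [sub_nonpos, le_div_iff₀ (by positivity)]
        nlinarith [heq]
    -- compute the payoff integral
    have hMres1 : Mres (1/2) = ∫ ω, (if z₀ < Z ω then Real.exp (Z ω / 2) else 0) ∂P := by
      show (∫ ω, (if z₀ < Z ω then Real.exp ((1/2) * Z ω) else 0) ∂P) = _
      congr 1; funext ω; ring_nf
    have hMres2 : Mres (-(1/2)) = ∫ ω, (if z₀ < Z ω then Real.exp (-(Z ω) / 2) else 0) ∂P := by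
      show (∫ ω, (if z₀ < Z ω then Real.exp ((-(1/2)) * Z ω) else 0) ∂P) = _
      congr 1; funext ω; ring_nf
    have hpayoff : (∫ ω, max (Real.sqrt (Fbar * Real.exp (Z ω))
        - K / Real.sqrt (Fbar * Real.exp (Z ω))) 0 ∂P)
        = s * Mres (1/2) - (K / s) * Mres (-(1/2)) := by
      simp_rw [hmax]
      rw [integral_sub hI1' hI2', hMres1, hMres2]
      congr 1
      · rw [← integral_const_mul]; congr 1; funext ω; rw [mul_ite, mul_zero]
      · rw [← integral_const_mul]; congr 1; funext ω; rw [mul_ite, mul_zero]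
    have hM1 : M (1/2) = A := by
      show (∫ ω, Real.exp ((1/2) * Z ω) ∂P) = A
      rw [hA_def]; congr 1; funext ω; ring_nf
    have hM2 : M (-(1/2)) = B := by
      show (∫ ω, Real.exp ((-(1/2)) * Z ω) ∂P) = B
      rw [hB_def]; congr 1; funext ω; ring_nf
    rw [hpayoff, int2 Fbar hFbarpos, ← hs_def, hM1, hM2]
    have hFA : Fbar * A = F * B := by
      rw [hFbar_def]; field_simp
    set m1 := Mres (1/2)
    set m2 := Mres (-(1/2))
    have hsA : s * s * A = F * B := by rw [hs2]; exact hFA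
    field_simp
    linear_combination m1 * hsA
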